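/- Let ζ = exp(πi/31) ∈ ℂ. Then [15]_ζ [18]_ζ [20]_ζ [21]_ζ [24]_ζ [25]_ζ [26]_ζ [27]_ζ [30]_ζ [32]_ζ [33]_ζ [35]_ζ = −[1]_ζ² [2]_ζ [4]_ζ² [5]_ζ [6]_ζ [7]_ζ [10]_ζ [11]_ζ [13]_ζ [16]_ζ; equivalently, the quantum dimension of the representation V(Λ_6 + Λ_8) of the simple Lie algebra of type E₈ at ζ, namely the quotient of the left-hand product by the product [1]_ζ² [2]_ζ [4]_ζ² [5]_ζ [6]_ζ [7]_ζ [10]_ζ [11]_ζ [13]_ζ [16]_ζ, equals −1. -/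

import Mathlib

open Complex

/-- `ζ = exp(πi/m)`, a primitive `2m`-th root of unity. -/
noncomputable def zeta (m : ℕ) : ℂ := Complex.exp (Real.pi * Complex.I / m)

/-- The `ζ`-integer `[n]_ζ = (ζ^n - ζ^{-n})/(ζ - ζ⁻¹)` for `ζ = exp(πi/m)`. -/
noncomputable def qint (m : ℕ) (n : ℤ) : ℂ :=
  (zeta m ^ n - zeta m ^ (-n)) / (zeta m - (zeta m)⁻¹)

lemma zeta31_ne : zeta 31 ≠ 0 := Complex.exp_ne_zero _

lemma zeta31_prim : IsPrimitiveRoot (zeta 31) 62 := by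
  have h := Complex.isPrimitiveRoot_exp 62 (by norm_num)
  convert h using 2
  unfold zeta
  push_cast
  ring_nf

lemma zeta31_pow31 : zeta 31 ^ (31 : ℤ) = -1 := by
  have : zeta 31 ^ (31 : ℕ) = -1 := by
    unfold zeta
    rw [← Complex.exp_nat_mul]
    push_cast
    have : (31 : ℂ) * (Real.pi * Complex.I / 31) = Real.pi * Complex.I := by
      field_simp
    rw [this, Complex.exp_pi_mul_I]
  simpa using this

lemma num_ne (n : ℕ) (h0 : 0 < n) (h1 : n < 31) :
    zeta 31 ^ (n : ℤ) - zeta 31 ^ (-(n : ℤ)) ≠ 0 := by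
  intro h
  have he : zeta 31 ^ (n : ℤ) = zeta 31 ^ (-(n : ℤ)) := sub_eq_zero.mp h
  have : zeta 31 ^ (2 * n) = 1 := by
    have : zeta 31 ^ ((2 * n : ℕ) : ℤ) = 1 := by
      push_cast
      rw [two_mul, zpow_add₀ zeta31_ne]
      nth_rewrite 1 [he]
      rw [← zpow_add₀ zeta31_ne]
      simp
    rwa [zpow_natCast] at this
  exact zeta31_prim.pow_ne_one_of_pos_of_lt (by omega) (by omega) this

lemma den_ne : zeta 31 - (zeta 31)⁻¹ ≠ 0 := by
  have h := num_ne 1 one_pos (by norm_num)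
  simp only [Nat.cast_one, zpow_one, zpow_neg] at h
  exact h

lemma qint_ne' (n : ℤ) (h0 : 0 < n) (h1 : n < 31) : qint 31 n ≠ 0 := by
  lift n to ℕ using h0.le
  exact div_ne_zero (num_ne n (by exact_mod_cast h0) (by exact_mod_cast h1)) den_ne

lemma pow_shift (k : ℤ) : zeta 31 ^ (31 - k) = -zeta 31 ^ (-k) := by
  rw [zpow_sub₀ zeta31_ne, zeta31_pow31, zpow_neg]
  field_simp

lemma pow_shift' (k : ℤ) : zeta 31 ^ (-(31 - k)) = -zeta 31 ^ k := by
  rw [neg_sub, zpow_sub₀ zeta31_ne, zeta31_pow31, div_neg, div_one]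

lemma qint_sub (k : ℤ) : qint 31 (31 - k) = qint 31 k := by
  unfold qint
  congr 1
  rw [pow_shift, pow_shift']
  ring

lemma qint_add (k : ℤ) : qint 31 (31 + k) = -qint 31 k := by
  unfold qint
  rw [zpow_add₀ zeta31_ne, zeta31_pow31, neg_add, zpow_add₀ zeta31_ne,
    zpow_neg (zeta 31) 31, zeta31_pow31]
  simp only [inv_neg, inv_one]
  rw [← neg_div]
  ring_nf

theorem qdim_E8_Lambda6_Lambda8 :
    qint 31 15 * qint 31 18 * qint 31 20 * qint 31 21 * qint 31 24 * qint 31 25 *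
        qint 31 26 * qint 31 27 * qint 31 30 * qint 31 32 * qint 31 33 * qint 31 35 =
        -(qint 31 1 ^ 2 * qint 31 2 * qint 31 4 ^ 2 * qint 31 5 * qint 31 6 * qint 31 7 *
          qint 31 10 * qint 31 11 * qint 31 13 * qint 31 16) ∧
      qint 31 15 * qint 31 18 * qint 31 20 * qint 31 21 * qint 31 24 * qint 31 25 *
          qint 31 26 * qint 31 27 * qint 31 30 * qint 31 32 * qint 31 33 * qint 31 35 /
        (qint 31 1 ^ 2 * qint 31 2 * qint 31 4 ^ 2 * qint 31 5 * qint 31 6 * qint 31 7 *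
          qint 31 10 * qint 31 11 * qint 31 13 * qint 31 16) = -1 := by
  have e15 : qint 31 15 = qint 31 16 := by simpa using qint_sub 16
  have e18 : qint 31 18 = qint 31 13 := by simpa using qint_sub 13
  have e20 : qint 31 20 = qint 31 11 := by simpa using qint_sub 11
  have e21 : qint 31 21 = qint 31 10 := by simpa using qint_sub 10
  have e24 : qint 31 24 = qint 31 7 := by simpa using qint_sub 7
  have e25 : qint 31 25 = qint 31 6 := by simpa using qint_sub 6
  have e26 : qint 31 26 = qint 31 5 := by simpa using qint_sub 5
  have e27 : qint 31 27 = qint 31 4 := by simpa using qint_sub 4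
  have e30 : qint 31 30 = qint 31 1 := by simpa using qint_sub 1
  have e32 : qint 31 32 = -qint 31 1 := by simpa using qint_add 1
  have e33 : qint 31 33 = -qint 31 2 := by simpa using qint_add 2
  have e35 : qint 31 35 = -qint 31 4 := by simpa using qint_add 4
  have h1 : qint 31 15 * qint 31 18 * qint 31 20 * qint 31 21 * qint 31 24 * qint 31 25 *
        qint 31 26 * qint 31 27 * qint 31 30 * qint 31 32 * qint 31 33 * qint 31 35 =
        -(qint 31 1 ^ 2 * qint 31 2 * qint 31 4 ^ 2 * qint 31 5 * qint 31 6 * qint 31 7 *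
          qint 31 10 * qint 31 11 * qint 31 13 * qint 31 16) := by
    rw [e15, e18, e20, e21, e24, e25, e26, e27, e30, e32, e33, e35]; ring
  have hD : qint 31 1 ^ 2 * qint 31 2 * qint 31 4 ^ 2 * qint 31 5 * qint 31 6 * qint 31 7 *
      qint 31 10 * qint 31 11 * qint 31 13 * qint 31 16 ≠ 0 :=
    mul_ne_zero (mul_ne_zero (mul_ne_zero (mul_ne_zero (mul_ne_zero (mul_ne_zero
      (mul_ne_zero (mul_ne_zero (mul_ne_zero
        (pow_ne_zero 2 (qint_ne' 1 (by norm_num) (by norm_num)))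
        (qint_ne' 2 (by norm_num) (by norm_num)))
        (pow_ne_zero 2 (qint_ne' 4 (by norm_num) (by norm_num))))
        (qint_ne' 5 (by norm_num) (by norm_num)))
        (qint_ne' 6 (by norm_num) (by norm_num)))
        (qint_ne' 7 (by norm_num) (by norm_num)))
        (qint_ne' 10 (by norm_num) (by norm_num)))
        (qint_ne' 11 (by norm_num) (by norm_num)))
        (qint_ne' 13 (by norm_num) (by norm_num)))
        (qint_ne' 16 (by norm_num) (by norm_num))
  exact ⟨h1, by rw [h1, neg_div, div_self hD]⟩
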